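/- Let R be a positive integer and let K : ℤ → ℂ be a periodic function with period R. Then for any finitely supported family of complex coefficients (a_m)_{m ∈ ℤ}, ∫_0^1 |∑_m a_m K(m) e(mt)| dt ≤ ((1/R) ∑_{j=1}^R |K̂(j/R)|) · ∫_0^1 |∑_m a_m e(mt)| dt, where K̂(j/R) = ∑_{s=1}^R K(s) e(−sj/R) is the discrete Fourier transform of K on ℤ/Rℤ. -/

import Mathlib

open MeasureTheory

/-- `e z = e^{2πiz}`. -/
noncomputable def e (x : ℝ) : ℂ := Complex.exp (2 * Real.pi * Complex.I * x)


lemma e_add (x y : ℝ) : e (x + y) = e x * e y := by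
  rw [e, e, e, ← Complex.exp_add]; congr 1; push_cast; ring

lemma e_int (k : ℤ) : e k = 1 := by
  rw [e, show (2 * Real.pi * Complex.I * ((k:ℝ):ℂ)) = k * (2 * Real.pi * Complex.I) by push_cast; ring,
    Complex.exp_int_mul_two_pi_mul_I]

lemma e_nat_mul (n : ℕ) (x : ℝ) : e (n * x) = e x ^ n := by
  rw [e, e, ← Complex.exp_nat_mul]; congr 1; push_cast; ring

lemma char_sum (R : ℕ) (hR : 0 < R) (k : ℤ) :
    ∑ j ∈ Finset.Icc 1 R, e ((k : ℝ) * j / R) = if (R:ℤ) ∣ k then (R:ℂ) else 0 := by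
  have hR' : (R : ℝ) ≠ 0 := Nat.cast_ne_zero.mpr hR.ne'
  have hterm : ∀ j : ℕ, e ((k:ℝ) * j / R) = (e ((k:ℝ)/R)) ^ j := by
    intro j
    rw [← e_nat_mul]
    congr 1; field_simp
  set ζ : ℂ := e ((k:ℝ) / R) with hζ
  rw [Finset.sum_congr rfl (fun j _ => hterm j)]
  have hζR : ζ ^ R = 1 := by
    rw [hζ, ← e_nat_mul]
    have : (R:ℝ) * ((k:ℝ)/R) = ((k:ℤ):ℝ) := by field_simp
    rw [this, e_int]
  by_cases h : (R:ℤ) ∣ k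
  · rw [if_pos h]
    obtain ⟨n, hn⟩ := h
    have hz1 : ζ = 1 := by
      rw [hζ]
      have : (k:ℝ)/R = ((n:ℤ):ℝ) := by
        rw [hn]; push_cast; rw [mul_comm]; exact mul_div_cancel_right₀ _ hR'
      rw [this, e_int]
    simp [hz1, Nat.card_Icc]
  · rw [if_neg h]
    have hζ1 : ζ ≠ 1 := by
      intro h1
      rw [hζ, e, Complex.exp_eq_one_iff] at h1
      obtain ⟨n, hn⟩ := h1
      have h2πI : (2 * Real.pi * Complex.I : ℂ) ≠ 0 := by
        simp [Complex.I_ne_zero, Real.pi_ne_zero]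
      have hkn : ((((k:ℝ)/R) : ℝ) : ℂ) = (n:ℂ) := by
        apply mul_left_cancel₀ h2πI
        rw [hn]; ring
      have hkn' : (k:ℝ)/R = (n:ℝ) := by exact_mod_cast hkn
      apply h
      refine ⟨n, ?_⟩
      have h2 : (k:ℝ) = n * R := by field_simp at hkn'; linarith [hkn']
      rw [mul_comm]; exact_mod_cast h2
    calc ∑ j ∈ Finset.Icc 1 R, ζ ^ j
        = ∑ j ∈ Finset.range R, ζ ^ (1 + j) := by
          rw [← Finset.Ico_add_one_right_eq_Icc, Finset.sum_Ico_eq_sum_range]; simp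
      _ = ζ * ∑ j ∈ Finset.range R, ζ ^ j := by
          rw [Finset.mul_sum]; apply Finset.sum_congr rfl; intro j _
          rw [pow_add, pow_one]
      _ = 0 := by
          rw [geom_sum_eq hζ1, hζR]; simp

lemma K_periodic_gen (R : ℕ) (K : ℤ → ℂ) (hK : ∀ m : ℤ, K (m + (R : ℤ)) = K m)
    (n : ℤ) (x : ℤ) : K (x + n * R) = K x := by
  have hP : Function.Periodic K (R:ℤ) := hK
  have := (hP.int_mul n) x
  simpa [mul_comm] using this

lemma inversion (R : ℕ) (hR : 0 < R) (K : ℤ → ℂ) (hK : ∀ m : ℤ, K (m + (R : ℤ)) = K m)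
    (m : ℤ) :
    K m * (R:ℂ) = ∑ j ∈ Finset.Icc 1 R,
      (∑ s ∈ Finset.Icc (1:ℤ) (R:ℤ), K s * e (-((s:ℝ) * (j:ℝ)) / (R:ℝ))) * e ((m:ℝ) * j / (R:ℝ)) := by
  have hR' : (R : ℝ) ≠ 0 := Nat.cast_ne_zero.mpr hR.ne'
  have step1 : ∀ j ∈ Finset.Icc 1 R,
      (∑ s ∈ Finset.Icc (1:ℤ) (R:ℤ), K s * e (-((s:ℝ) * (j:ℝ)) / (R:ℝ))) * e ((m:ℝ) * j / (R:ℝ))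
      = ∑ s ∈ Finset.Icc (1:ℤ) (R:ℤ), K s * e ((((m - s : ℤ)):ℝ) * j / (R:ℝ)) := by
    intro j _
    rw [Finset.sum_mul]
    apply Finset.sum_congr rfl
    intro s _
    rw [mul_assoc, ← e_add]
    congr 2
    push_cast
    field_simp
    ring
  rw [Finset.sum_congr rfl step1, Finset.sum_comm]
  have step2 : ∀ s ∈ Finset.Icc (1:ℤ) (R:ℤ),
      ∑ j ∈ Finset.Icc 1 R, K s * e ((((m - s : ℤ)):ℝ) * j / (R:ℝ))
      = K s * (if (R:ℤ) ∣ (m - s) then (R:ℂ) else 0) := by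
    intro s _
    rw [← Finset.mul_sum, char_sum R hR]
  rw [Finset.sum_congr rfl step2]
  set s₀ : ℤ := (m - 1) % R + 1 with hs₀
  have hmem : s₀ ∈ Finset.Icc (1:ℤ) (R:ℤ) := by
    rw [Finset.mem_Icc]
    constructor
    · have := Int.emod_nonneg (m - 1) (by exact_mod_cast hR.ne' : (R:ℤ) ≠ 0)
      omega
    · have := Int.emod_lt_of_pos (m - 1) (by exact_mod_cast hR : (0:ℤ) < R)
      omega
  have hdvd : (R:ℤ) ∣ (m - s₀) := by
    refine ⟨(m - 1) / R, ?_⟩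
    have := Int.emod_add_mul_ediv (m - 1) (R:ℤ)
    omega
  rw [Finset.sum_eq_single_of_mem s₀ hmem]
  · rw [if_pos hdvd]
    congr 1
    obtain ⟨n, hn⟩ := hdvd
    have : m = s₀ + n * R := by linarith [hn]
    rw [this, K_periodic_gen R K hK]
  · intro b hb hne
    rw [Finset.mem_Icc] at hb
    rw [if_neg, mul_zero]
    intro hd
    apply hne
    have h1 : (R:ℤ) ∣ (s₀ - b) := by
      have := dvd_sub hdvd hd
      simpa using (dvd_sub hd hdvd)
    rw [Finset.mem_Icc] at hmem
    have hz : s₀ - b = 0 := Int.eq_zero_of_abs_lt_dvd h1 (by rw [abs_lt]; omega)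
    omega

lemma continuous_e : Continuous e := by
  unfold e; fun_prop


/-- Lemma 3.4: if `K : ℤ → ℂ` is periodic with period `R`, then for any finitely supported
family of coefficients (here supported on a finite set `S`),
`∫_0^1 |∑_m a_m K(m) e(mt)| dt ≤ ((1/R) ∑_{j=1}^R |K̂(j/R)|) ∫_0^1 |∑_m a_m e(mt)| dt`,
where `K̂(j/R) = ∑_{s=1}^R K(s) e(−sj/R)`. -/
theorem periodic_multiplier_bound
    (R : ℕ) (hR : 0 < R) (K : ℤ → ℂ) (hK : ∀ m : ℤ, K (m + (R : ℤ)) = K m)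
    (S : Finset ℤ) (a : ℤ → ℂ) :
    (∫ t in (0:ℝ)..1, ‖∑ m ∈ S, a m * K m * e ((m : ℝ) * t)‖) ≤
      ((1 / (R : ℝ)) * ∑ j ∈ Finset.Icc 1 R,
          ‖∑ s ∈ Finset.Icc (1 : ℤ) (R : ℤ), K s * e (-((s : ℝ) * (j : ℝ)) / (R : ℝ))‖) *
        ∫ t in (0:ℝ)..1, ‖∑ m ∈ S, a m * e ((m : ℝ) * t)‖ := by
  have hR' : (R : ℝ) ≠ 0 := Nat.cast_ne_zero.mpr hR.ne'
  have hRC : (R : ℂ) ≠ 0 := Nat.cast_ne_zero.mpr hR.ne'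
  set c : ℕ → ℂ := fun j => ∑ s ∈ Finset.Icc (1:ℤ) (R:ℤ), K s * e (-((s:ℝ) * (j:ℝ)) / (R:ℝ)) with hc
  set g : ℝ → ℂ := fun t => ∑ m ∈ S, a m * e ((m:ℝ) * t) with hg
  -- pointwise identity
  have key : ∀ t : ℝ, ∑ m ∈ S, a m * K m * e ((m:ℝ) * t)
      = (R:ℂ)⁻¹ * ∑ j ∈ Finset.Icc 1 R, c j * g (t + j / R) := by
    intro t
    have hKm : ∀ m : ℤ, K m = (R:ℂ)⁻¹ * ∑ j ∈ Finset.Icc 1 R, c j * e ((m:ℝ) * j / (R:ℝ)) := by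
      intro m
      rw [inv_mul_eq_div, eq_div_iff hRC]
      exact inversion R hR K hK m
    calc ∑ m ∈ S, a m * K m * e ((m:ℝ) * t)
        = ∑ m ∈ S, ∑ j ∈ Finset.Icc 1 R,
            (R:ℂ)⁻¹ * (c j * (a m * e ((m:ℝ) * (t + j / R)))) := by
          apply Finset.sum_congr rfl
          intro m _
          rw [hKm m, Finset.mul_sum, Finset.mul_sum, Finset.sum_mul]
          apply Finset.sum_congr rfl
          intro j _
          rw [show (m:ℝ) * (t + j / R) = (m:ℝ) * t + (m:ℝ) * j / R by ring, e_add]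
          ring
      _ = (R:ℂ)⁻¹ * ∑ j ∈ Finset.Icc 1 R, c j * g (t + j / R) := by
          rw [Finset.sum_comm, Finset.mul_sum]
          apply Finset.sum_congr rfl
          intro j _
          rw [hg]
          simp only []
          rw [← Finset.mul_sum, ← Finset.mul_sum]
  -- continuity
  have hgc : Continuous g := by
    apply continuous_finset_sum
    intro m _
    exact continuous_const.mul (continuous_e.comp (continuous_const.mul continuous_id))
  -- periodicity of ‖g‖
  have hper : Function.Periodic (fun t => ‖g t‖) 1 := by
    intro t
    have : g (t + 1) = g t := by
      apply Finset.sum_congr rfl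
      intro m _
      congr 1
      rw [show (m:ℝ) * (t + 1) = (m:ℝ) * t + (m : ℤ) by push_cast; ring, e_add, e_int, mul_one]
    simp [this]
  have hshift : ∀ d : ℝ, (∫ t in (0:ℝ)..1, ‖g (t + d)‖) = ∫ t in (0:ℝ)..1, ‖g t‖ := by
    intro d
    rw [intervalIntegral.integral_comp_add_right (fun t => ‖g t‖) d]
    have := hper.intervalIntegral_add_eq d 0
    simpa [zero_add, add_comm] using this
  -- main chain
  set I : ℝ := ∫ t in (0:ℝ)..1, ‖g t‖ with hI
  calc (∫ t in (0:ℝ)..1, ‖∑ m ∈ S, a m * K m * e ((m:ℝ) * t)‖)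
      = ∫ t in (0:ℝ)..1, ‖(R:ℂ)⁻¹ * ∑ j ∈ Finset.Icc 1 R, c j * g (t + j / R)‖ := by
        apply intervalIntegral.integral_congr
        intro t _
        simp only [key t]
    _ ≤ ∫ t in (0:ℝ)..1, ∑ j ∈ Finset.Icc 1 R, (R:ℝ)⁻¹ * ‖c j‖ * ‖g (t + j / R)‖ := by
        apply intervalIntegral.integral_mono_on (by norm_num)
        · apply Continuous.intervalIntegrable
          apply Continuous.norm
          apply continuous_const.mul
          apply continuous_finset_sum
          intro j _
          exact continuous_const.mul (hgc.comp (continuous_id.add continuous_const))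
        · apply Continuous.intervalIntegrable
          apply continuous_finset_sum
          intro j _
          exact continuous_const.mul ((hgc.comp (continuous_id.add continuous_const)).norm)
        · intro t _
          rw [norm_mul]
          calc ‖(R:ℂ)⁻¹‖ * ‖∑ j ∈ Finset.Icc 1 R, c j * g (t + j / R)‖
              ≤ ‖(R:ℂ)⁻¹‖ * ∑ j ∈ Finset.Icc 1 R, ‖c j * g (t + j / R)‖ := by
                apply mul_le_mul_of_nonneg_left (norm_sum_le _ _) (norm_nonneg _)
            _ = ∑ j ∈ Finset.Icc 1 R, (R:ℝ)⁻¹ * ‖c j‖ * ‖g (t + j / R)‖ := by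
                rw [Finset.mul_sum]
                apply Finset.sum_congr rfl
                intro j _
                rw [norm_mul]
                have : ‖((R:ℂ))⁻¹‖ = (R:ℝ)⁻¹ := by
                  rw [norm_inv]
                  norm_num
                rw [this]; ring
    _ = ∑ j ∈ Finset.Icc 1 R, (R:ℝ)⁻¹ * ‖c j‖ * I := by
        rw [intervalIntegral.integral_finset_sum]
        · apply Finset.sum_congr rfl
          intro j _
          rw [intervalIntegral.integral_const_mul, hshift]
        · intro j _
          apply Continuous.intervalIntegrable
          exact continuous_const.mul ((hgc.comp (continuous_id.add continuous_const)).norm)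
    _ = ((1 / (R:ℝ)) * ∑ j ∈ Finset.Icc 1 R, ‖c j‖) * I := by
        rw [← Finset.sum_mul, Finset.mul_sum, one_div]
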